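/- Let G be a finite group and V a finite-dimensional irreducible complex representation of G with character χ, extended ℂ-linearly to the group algebra ℂ[G]. Then the map z ↦ χ(z)/χ(1) restricted to the center of ℂ[G] is a ℂ-algebra homomorphism; equivalently, for all z, w in the center of ℂ[G], χ(z·w)·χ(1) = χ(z)·χ(w). -/

import Mathlib

/-- Let `G` be a finite group and `V` a finite-dimensional irreducible complex
representation of `G` (irreducible: `V ≠ 0` and the only `G`-invariant subspaces are
`⊥` and `⊤`, i.e. `V` is a simple `ℂ[G]`-module), with character `χ` extended
`ℂ`-linearly to the group algebra `ℂ[G]`.  Then the normalized character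
`z ↦ χ(z)/χ(1)` is an algebra homomorphism on the center of `ℂ[G]`; equivalently,
for all `z, w` in the center of `ℂ[G]`, `χ(z·w)·χ(1) = χ(z)·χ(w)`. -/
theorem normalized_character_multiplicative_on_center
    {G : Type*} [Group G] [Fintype G]
    {V : Type*} [AddCommGroup V] [Module ℂ V] [FiniteDimensional ℂ V]
    (ρ : Representation ℂ G V) (hV : Nontrivial V)
    (hirr : ∀ p : Submodule ℂ V, (∀ g : G, ∀ x ∈ p, ρ g x ∈ p) → p = ⊥ ∨ p = ⊤)
    (χ : MonoidAlgebra ℂ G → ℂ)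
    (hχ : ∀ z : MonoidAlgebra ℂ G,
      χ z = z.coeff.sum fun g a => a * LinearMap.trace ℂ V (ρ g)) :
    ∀ z w : MonoidAlgebra ℂ G,
      z ∈ Subalgebra.center ℂ (MonoidAlgebra ℂ G) →
      w ∈ Subalgebra.center ℂ (MonoidAlgebra ℂ G) →
      χ (z * w) * χ 1 = χ z * χ w := by
  have tr : ∀ u : MonoidAlgebra ℂ G,
      χ u = LinearMap.trace ℂ V (ρ.asAlgebraHom u) := by
    intro u
    rw [hχ]
    conv_rhs => rw [← MonoidAlgebra.sum_coeff_single u]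
    rw [map_finsuppSum, map_finsuppSum]
    refine Finsupp.sum_congr fun g _ => ?_
    rw [Representation.asAlgebraHom_single, map_smul, smul_eq_mul]
  have key : ∀ u : MonoidAlgebra ℂ G, u ∈ Subalgebra.center ℂ (MonoidAlgebra ℂ G) →
      ∃ c : ℂ, ρ.asAlgebraHom u = c • (1 : Module.End ℂ V) := by
    intro u hu
    obtain ⟨c, hc⟩ := Module.End.exists_eigenvalue (ρ.asAlgebraHom u)
    refine ⟨c, ?_⟩
    have hcomm : ∀ g : G, ∀ x : V, ρ.asAlgebraHom u (ρ g x) = ρ g (ρ.asAlgebraHom u x) := by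
      intro g x
      have h := (Subalgebra.mem_center_iff.mp hu) (MonoidAlgebra.single g 1)
      have := congrArg (fun t => ρ.asAlgebraHom t x) h
      simpa [map_mul, Representation.asAlgebraHom_single_one] using this.symm
    have hinv : ∀ g : G, ∀ x ∈ Module.End.eigenspace (ρ.asAlgebraHom u) c,
        ρ g x ∈ Module.End.eigenspace (ρ.asAlgebraHom u) c := by
      intro g x hx
      rw [Module.End.mem_eigenspace_iff] at hx ⊢
      rw [hcomm, hx, map_smul]
    rcases hirr _ hinv with h | h
    · exact absurd h hc
    · ext x
      have hx : x ∈ Module.End.eigenspace (ρ.asAlgebraHom u) c := h ▸ Submodule.mem_top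
      simpa [Module.End.mem_eigenspace_iff] using hx
  intro z w hz hw
  obtain ⟨c, hc⟩ := key z hz
  obtain ⟨d, hd⟩ := key w hw
  have hzw : ρ.asAlgebraHom (z * w) = (c * d) • (1 : Module.End ℂ V) := by
    rw [map_mul, hc, hd, smul_mul_smul_comm, one_mul]
  rw [tr, tr, tr, tr, hc, hd, hzw, map_one]
  simp only [map_smul, smul_eq_mul]
  ring
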